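/- Let x : (0,∞) → ℝ³ be twice differentiable with x(t) ≠ 0, satisfying x''(t) + t^{-1/2} x(t)/‖x(t)‖³ = 0. Then the function I(t) = 2t (½‖x'(t)‖² - t^{-1/2}/‖x(t)‖) - ⟨x(t), x'(t)⟩ is constant. -/

import Mathlib

open Real RealInnerProductSpace

-- derivative of norm
lemma hasDerivAt_norm_comp {x : ℝ → EuclideanSpace ℝ (Fin 3)} {v : EuclideanSpace ℝ (Fin 3)}
    {t : ℝ} (hx : HasDerivAt x v t) (hne : x t ≠ 0) :
    HasDerivAt (fun s => ‖x s‖) (⟪x t, v⟫ / ‖x t‖) t := by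
  have hsq : HasDerivAt (fun s => ‖x s‖ ^ 2) (2 * ⟪x t, v⟫) t := hx.norm_sq
  have hnz : ‖x t‖ ^ 2 ≠ 0 := pow_ne_zero _ (norm_ne_zero_iff.mpr hne)
  have h := (Real.hasDerivAt_sqrt hnz).comp t hsq
  have heqf : ((fun y => Real.sqrt y) ∘ fun s => ‖x s‖ ^ 2) = fun s => ‖x s‖ := by
    funext s; simp [Function.comp, Real.sqrt_sq (norm_nonneg _)]
  rw [heqf] at h
  refine h.congr_deriv ?_
  rw [Real.sqrt_sq (norm_nonneg _)]
  field_simp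

theorem kepler_noether_integral
    (x : ℝ → EuclideanSpace ℝ (Fin 3))
    (hx : ∀ t > (0:ℝ), DifferentiableAt ℝ x t)
    (hx' : ∀ t > (0:ℝ), DifferentiableAt ℝ (deriv x) t)
    (hne : ∀ t > (0:ℝ), x t ≠ 0)
    (heq : ∀ t > (0:ℝ),
      deriv (deriv x) t + (t ^ (-(1:ℝ)/2) / ‖x t‖ ^ 3) • x t = 0)
    (I : ℝ → ℝ)
    (hI : ∀ t, I t = 2 * t * ((1/2) * ‖deriv x t‖ ^ 2 - t ^ (-(1:ℝ)/2) / ‖x t‖)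
        - ⟪x t, deriv x t⟫) :
    ∀ t₁ > (0:ℝ), ∀ t₂ > (0:ℝ), I t₁ = I t₂ := by
  -- main step: HasDerivAt I 0 t for t > 0
  have key : ∀ t > (0:ℝ), HasDerivAt I 0 t := by
    intro t ht
    set v := deriv x t with hv
    set a := deriv (deriv x) t with ha
    have hxd : HasDerivAt x v t := (hx t ht).hasDerivAt
    have hvd : HasDerivAt (deriv x) a t := (hx' t ht).hasDerivAt
    have hrne : ‖x t‖ ≠ 0 := norm_ne_zero_iff.mpr (hne t ht)
    have htne : t ≠ 0 := ne_of_gt ht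
    -- derivative of ‖x s‖
    have hn : HasDerivAt (fun s => ‖x s‖) (⟪x t, v⟫ / ‖x t‖) t :=
      hasDerivAt_norm_comp hxd (hne t ht)
    -- derivative of t^(-1/2)
    have hp : HasDerivAt (fun s : ℝ => s ^ (-(1:ℝ)/2))
        ((-(1:ℝ)/2) * t ^ ((-(1:ℝ)/2) - 1)) t :=
      Real.hasDerivAt_rpow_const (Or.inl htne)
    -- derivative of ‖deriv x s‖^2
    have hnv : HasDerivAt (fun s => ‖deriv x s‖ ^ 2) (2 * ⟪deriv x t, a⟫) t := hvd.norm_sq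
    -- derivative of inner
    have hin : HasDerivAt (fun s => ⟪x s, deriv x s⟫) (⟪x t, a⟫ + ⟪v, deriv x t⟫) t :=
      hxd.inner ℝ hvd
    -- assemble
    have hquot : HasDerivAt (fun s => s ^ (-(1:ℝ)/2) / ‖x s‖)
        ((((-(1:ℝ)/2) * t ^ ((-(1:ℝ)/2) - 1)) * ‖x t‖
          - t ^ (-(1:ℝ)/2) * (⟪x t, v⟫ / ‖x t‖)) / ‖x t‖ ^ 2) t :=
      hp.div hn hrne
    have hE : HasDerivAt (fun s => (1/2 : ℝ) * ‖deriv x s‖ ^ 2 - s ^ (-(1:ℝ)/2) / ‖x s‖)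
        ((1/2) * (2 * ⟪deriv x t, a⟫)
          - (((-(1:ℝ)/2) * t ^ ((-(1:ℝ)/2) - 1)) * ‖x t‖
            - t ^ (-(1:ℝ)/2) * (⟪x t, v⟫ / ‖x t‖)) / ‖x t‖ ^ 2) t :=
      ((hnv.const_mul (1/2:ℝ)).sub hquot)
    have h2t : HasDerivAt (fun s : ℝ => 2 * s) 2 t := by
      simpa using (hasDerivAt_id t).const_mul (2:ℝ)
    have hItot : HasDerivAt I
        (2 * ((1/2) * ‖deriv x t‖ ^ 2 - t ^ (-(1:ℝ)/2) / ‖x t‖)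
          + 2 * t * ((1/2) * (2 * ⟪deriv x t, a⟫)
            - (((-(1:ℝ)/2) * t ^ ((-(1:ℝ)/2) - 1)) * ‖x t‖
              - t ^ (-(1:ℝ)/2) * (⟪x t, v⟫ / ‖x t‖)) / ‖x t‖ ^ 2)
          - (⟪x t, a⟫ + ⟪v, deriv x t⟫)) t := by
      have := (h2t.mul hE).sub hin
      have hfun : I = fun s => 2 * s * ((1/2) * ‖deriv x s‖ ^ 2 - s ^ (-(1:ℝ)/2) / ‖x s‖)
          - ⟪x s, deriv x s⟫ := funext hI
      rw [hfun]
      exact this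
    -- show the derivative value is 0
    have haval : a = -((t ^ (-(1:ℝ)/2) / ‖x t‖ ^ 3)) • x t := by
      have := heq t ht
      rw [add_eq_zero_iff_eq_neg] at this
      rw [ha, this, neg_smul]
    have hinna : ⟪x t, a⟫ = -(t ^ (-(1:ℝ)/2) / ‖x t‖ ^ 3) * ‖x t‖ ^ 2 := by
      rw [haval, real_inner_smul_right, real_inner_self_eq_norm_sq]
    have hinva : ⟪deriv x t, a⟫ = -(t ^ (-(1:ℝ)/2) / ‖x t‖ ^ 3) * ⟪deriv x t, x t⟫ := by
      rw [haval, real_inner_smul_right]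
    have hsym : ⟪deriv x t, x t⟫ = ⟪x t, deriv x t⟫ := real_inner_comm _ _
    have hvv : ⟪v, deriv x t⟫ = ‖deriv x t‖ ^ 2 := by
      rw [hv, real_inner_self_eq_norm_sq]
    have hrpow : t ^ ((-(1:ℝ)/2) - 1) = t ^ (-(1:ℝ)/2) / t := by
      rw [Real.rpow_sub ht, Real.rpow_one]
    convert hItot using 1
    rw [hinva, hinna, hsym, hvv, hrpow, hv]
    field_simp
    ring
  -- conclude constancy
  have main : ∀ s₁ s₂ : ℝ, 0 < s₁ → s₁ ≤ s₂ → I s₂ = I s₁ := by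
    intro s₁ s₂ h1 hle
    have hcont : ContinuousOn I (Set.Icc s₁ s₂) := fun u hu =>
      ((key u (lt_of_lt_of_le h1 hu.1)).continuousAt).continuousWithinAt
    exact constant_of_has_deriv_right_zero hcont
      (fun u hu => ((key u (lt_of_lt_of_le h1 hu.1)).hasDerivWithinAt)) s₂
      (Set.right_mem_Icc.mpr hle)
  intro t₁ ht₁ t₂ ht₂
  rcases le_total t₁ t₂ with h | h
  · exact (main t₁ t₂ ht₁ h).symm
  · exact main t₂ t₁ ht₂ h
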